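/- For the robot manipulator Cartesian-space dynamics defined by M_x = J^{-T} M J^{-1} and C_x = J^{-T}(C - M J^{-1} J̇) J^{-1}, if Ṁ(q) - 2C(q,q̇) is skew-symmetric (where Ṁ = d/dt [M(q(t))]), then Ṁ_x - 2C_x is also skew-symmetric. -/

import Mathlib

open Matrix

private lemma det_differentiableAt {n : ℕ} {t₀ : ℝ} {A : ℝ → Matrix (Fin n) (Fin n) ℝ}
    (hA : ∀ i j, DifferentiableAt ℝ (fun t => A t i j) t₀) :
    DifferentiableAt ℝ (fun t => (A t).det) t₀ := by
  simp only [Matrix.det_apply']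
  exact DifferentiableAt.fun_sum fun σ _ =>
    (DifferentiableAt.fun_finsetProd fun i _ => hA (σ i) i).const_mul _

private lemma inv_entry_differentiableAt {n : ℕ} {t₀ : ℝ} {J : ℝ → Matrix (Fin n) (Fin n) ℝ}
    (hJinv : IsUnit (J t₀).det)
    (hJ : ∀ i j, DifferentiableAt ℝ (fun t => J t i j) t₀) (i j : Fin n) :
    DifferentiableAt ℝ (fun t => (J t)⁻¹ i j) t₀ := by
  have h1 : ∀ t, (J t)⁻¹ i j = (Matrix.adjugate (J t)) i j / (J t).det := by
    intro t
    rw [Matrix.inv_def, Matrix.smul_apply, Ring.inverse_eq_inv', smul_eq_mul, div_eq_inv_mul]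
  simp only [h1]
  have hdetne : (J t₀).det ≠ 0 := hJinv.ne_zero
  have hadj : DifferentiableAt ℝ (fun t => (Matrix.adjugate (J t)) i j) t₀ := by
    simp only [Matrix.adjugate_apply]
    exact det_differentiableAt fun k l => by
      by_cases hk : k = j
      · simp only [hk, Matrix.updateRow_apply, if_pos rfl]
        exact differentiableAt_const _
      · simp only [Matrix.updateRow_apply, if_neg hk]
        exact hJ k l
  exact hadj.div (det_differentiableAt hJ) hdetne

private lemma hasDerivAt_matrix_mul {n : ℕ} {t₀ : ℝ}
    {A B : ℝ → Matrix (Fin n) (Fin n) ℝ} {A' B' : Matrix (Fin n) (Fin n) ℝ}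
    (hA : ∀ i j, HasDerivAt (fun t => A t i j) (A' i j) t₀)
    (hB : ∀ i j, HasDerivAt (fun t => B t i j) (B' i j) t₀) (i j : Fin n) :
    HasDerivAt (fun t => (A t * B t) i j) ((A' * B t₀ + A t₀ * B') i j) t₀ := by
  simp only [Matrix.mul_apply, Matrix.add_apply, ← Finset.sum_add_distrib]
  exact HasDerivAt.fun_sum fun k _ => (hA i k).mul (hB k j)

/-- skew-symmetry of `Ṁ_x - 2 C_x` in Cartesian space,
given skew-symmetry of `Ṁ - 2C` in joint space. All time derivatives are
taken entrywise at a fixed time `t₀`. -/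
theorem stmt_4 {n : ℕ} (t₀ : ℝ)
    (M C J : ℝ → Matrix (Fin n) (Fin n) ℝ)
    (M' J' Mx' : Matrix (Fin n) (Fin n) ℝ)
    (hMsym : ∀ t, (M t)ᵀ = M t)
    (hJinv : ∀ t, IsUnit (J t).det)
    (hM' : ∀ i j, HasDerivAt (fun t => M t i j) (M' i j) t₀)
    (hJ' : ∀ i j, HasDerivAt (fun t => J t i j) (J' i j) t₀)
    (hMx' : ∀ i j,
      HasDerivAt (fun t => (((J t)⁻¹)ᵀ * M t * (J t)⁻¹) i j) (Mx' i j) t₀)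
    (hskew : (M' - 2 • C t₀)ᵀ = -(M' - 2 • C t₀)) :
    let Cx := ((J t₀)⁻¹)ᵀ * (C t₀ - M t₀ * (J t₀)⁻¹ * J') * (J t₀)⁻¹
    (Mx' - 2 • Cx)ᵀ = -(Mx' - 2 • Cx) := by
  intro Cx
  -- entrywise derivative of the inverse
  set K : Matrix (Fin n) (Fin n) ℝ :=
    Matrix.of fun i j => deriv (fun t => (J t)⁻¹ i j) t₀ with hKdef
  have hK : ∀ i j, HasDerivAt (fun t => (J t)⁻¹ i j) (K i j) t₀ := fun i j =>
    (inv_entry_differentiableAt (hJinv t₀)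
      (fun i j => (hJ' i j).differentiableAt) i j).hasDerivAt
  -- derivative of J⁻¹ * J = 1 :  K * J + J⁻¹ * J' = 0
  have hKJ : K * J t₀ + (J t₀)⁻¹ * J' = 0 := by
    ext i j
    have h2 := hasDerivAt_matrix_mul hK hJ' i j
    have h1 : ∀ t, ((J t)⁻¹ * J t) i j = (1 : Matrix (Fin n) (Fin n) ℝ) i j := fun t => by
      rw [Matrix.nonsing_inv_mul _ (hJinv t)]
    have h3 : HasDerivAt (fun t => ((J t)⁻¹ * J t) i j) 0 t₀ := by
      simp only [h1]; exact hasDerivAt_const _ _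
    have := h2.unique h3
    simpa using this
  have hKeq : K = -((J t₀)⁻¹ * J' * (J t₀)⁻¹) := by
    have h4 : K * J t₀ = -((J t₀)⁻¹ * J') := by
      rw [eq_neg_iff_add_eq_zero]; exact hKJ
    calc K = K * (J t₀ * (J t₀)⁻¹) := by
            rw [Matrix.mul_nonsing_inv _ (hJinv t₀), mul_one]
      _ = (K * J t₀) * (J t₀)⁻¹ := by rw [mul_assoc]
      _ = -((J t₀)⁻¹ * J' * (J t₀)⁻¹) := by rw [h4]; noncomm_ring
  -- derivative of transpose of inverse
  have hKT : ∀ i j, HasDerivAt (fun t => ((J t)⁻¹)ᵀ i j) (Kᵀ i j) t₀ := fun i j => hK j i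
  -- derivative of Mx
  have hMxcalc : ∀ i j, HasDerivAt (fun t => (((J t)⁻¹)ᵀ * M t * (J t)⁻¹) i j)
      (((Kᵀ * M t₀ + ((J t₀)⁻¹)ᵀ * M') * (J t₀)⁻¹ + (((J t₀)⁻¹)ᵀ * M t₀) * K) i j) t₀ :=
    hasDerivAt_matrix_mul (hasDerivAt_matrix_mul hKT hM') hK
  have hMx : Mx' = (Kᵀ * M t₀ + ((J t₀)⁻¹)ᵀ * M') * (J t₀)⁻¹ + (((J t₀)⁻¹)ᵀ * M t₀) * K := by
    ext i j
    exact (hMx' i j).unique (hMxcalc i j)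
  -- now pure algebra
  set S : Matrix (Fin n) (Fin n) ℝ := M' - 2 • C t₀ with hS
  have hM'eq : M' = S + 2 • C t₀ := by rw [hS]; abel
  have hMsym0 := hMsym t₀
  show (Mx' - 2 • Cx)ᵀ = -(Mx' - 2 • Cx)
  rw [hMx, hKeq, hM'eq]
  unfold Cx
  simp only [two_smul, Matrix.transpose_mul, Matrix.transpose_add, Matrix.transpose_sub,
    Matrix.transpose_neg, Matrix.transpose_transpose, hMsym0, hskew]
  rw [hS] at hskew ⊢
  simp only [Matrix.transpose_sub, Matrix.transpose_smul, hMsym0] at hskew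
  noncomm_ring
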